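/- Suppose X → Y → Z' → X⟦1⟧ and X' → Z → Y → X'⟦1⟧ are distinguished triangles in 𝒞 that are both thin, i.e. m(Y) = m(X) + m(Z') and m(Z) = m(X') + m(Y). Suppose further that Y' is an object fitting into distinguished triangles X' → Y' → X → X'⟦1⟧ and Y' → Z → Z' → Y'⟦1⟧ (as produced by the dual octahedral axiom). Then both of these triangles are thin: m(Y') = m(X') + m(X) and m(Z) = m(Y') + m(Z'). -/

import Mathlib

open CategoryTheory Category Limits Pretriangulated

/-- (ET4op) for thin triangles: if `X → Y → Z'` and `X' → Z → Y` are thin distinguished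
triangles and `Y'` fits into distinguished triangles `X' → Y' → X` and `Y' → Z → Z'`
(as produced by the dual octahedral axiom), then both of the latter triangles are thin. -/
theorem thin_ET4op {C : Type*} [Category C] [Preadditive C] [HasZeroObject C]
    [HasShift C ℤ] [∀ n : ℤ, (CategoryTheory.shiftFunctor C n).Additive]
    [Pretriangulated C] [IsTriangulated C] [HasBinaryBiproducts C]
    (m : C → ℝ)
    (hiso : ∀ {X Y : C}, (X ≅ Y) → m X = m Y)
    (hadd : ∀ X Y : C, m (X ⊞ Y) = m X + m Y)
    (hshift : ∀ X : C, m (X⟦(1 : ℤ)⟧) = m X)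
    (htri : ∀ T : Triangle C, T ∈ (distTriang C) → m T.obj₂ ≤ m T.obj₁ + m T.obj₃)
    {X Y Z X' Z' Y' : C}
    (u₁ : X ⟶ Y) (v₁ : Y ⟶ Z') (w₁ : Z' ⟶ X⟦(1 : ℤ)⟧)
    (hT₁ : Triangle.mk u₁ v₁ w₁ ∈ distTriang C)
    (hthin₁ : m Y = m X + m Z')
    (u₂ : X' ⟶ Z) (v₂ : Z ⟶ Y) (w₂ : Y ⟶ X'⟦(1 : ℤ)⟧)
    (hT₂ : Triangle.mk u₂ v₂ w₂ ∈ distTriang C)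
    (hthin₂ : m Z = m X' + m Y)
    (u₃ : X' ⟶ Y') (v₃ : Y' ⟶ X) (w₃ : X ⟶ X'⟦(1 : ℤ)⟧)
    (hT₃ : Triangle.mk u₃ v₃ w₃ ∈ distTriang C)
    (u₄ : Y' ⟶ Z) (v₄ : Z ⟶ Z') (w₄ : Z' ⟶ Y'⟦(1 : ℤ)⟧)
    (hT₄ : Triangle.mk u₄ v₄ w₄ ∈ distTriang C) :
    m Y' = m X' + m X ∧ m Z = m Y' + m Z' := by
  have h3 := htri _ hT₃
  have h4 := htri _ hT₄
  change m Y' ≤ m X' + m X at h3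
  change m Z ≤ m Y' + m Z' at h4
  constructor <;> linarith
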